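/- Let p be a prime, let k be an algebraically closed field of characteristic p, and let h_1, …, h_n be integers with 1 ≤ h_i ≤ p for every i. For indeterminates Y_1, …, Y_n, write ∏_{i=1}^n (X − Y_i)^{p − h_i} = ∑_j a_j X^j with a_j ∈ k[Y_1, …, Y_n]. Then there exist pairwise distinct elements p_1, …, p_n of k such that 1/∏_{i=1}^n (x − p_i)^{h_i} is exact if and only if the ideal of the polynomial ring k[Y_1, …, Y_n, S] generated by the set {a_j : j ≡ p − 1 (mod p)} together with the element 1 − S · ∏_{1 ≤ j < l ≤ n} (Y_j − Y_l) is not the unit ideal. -/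

import Mathlib

open Polynomial

/-- `HasDerivRF f g` means `g` is the formal derivative of the rational function `f` in `k(x)`:
if `f = u / v` with `v ≠ 0`, then `g = (u' v - u v') / v ^ 2`. -/
def HasDerivRF {k : Type*} [Field k] (f g : RatFunc k) : Prop :=
  ∃ u v : Polynomial k, v ≠ 0 ∧
    f = algebraMap (Polynomial k) (RatFunc k) u / algebraMap (Polynomial k) (RatFunc k) v ∧
    g = algebraMap (Polynomial k) (RatFunc k)
          (Polynomial.derivative u * v - u * Polynomial.derivative v) /
        algebraMap (Polynomial k) (RatFunc k) (v ^ 2)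

/-- A rational function is exact if it is the formal derivative of some rational function. -/
def IsExactRF {k : Type*} [Field k] (g : RatFunc k) : Prop := ∃ f : RatFunc k, HasDerivRF f g

section Aux
variable {k : Type*} [Field k]

private lemma iterDerMulConst {S : k[X]} (hS : derivative S = 0) (m : ℕ) (A : k[X]) :
    derivative^[m] (A * S) = derivative^[m] A * S := by
  induction m generalizing A with
  | zero => simp
  | succ m ih =>
    rw [Function.iterate_succ_apply, Function.iterate_succ_apply, derivative_mul, hS,
      mul_zero, add_zero, ih]

private lemma iterDerP {p : ℕ} (hp : 0 < p) [CharP k p] (u : k[X]) :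
    derivative^[p] u = 0 := by
  ext m
  rw [Polynomial.coeff_iterate_derivative, coeff_zero, nsmul_eq_mul]
  have hdvd : p ∣ (m + p).descFactorial p := by
    rw [Nat.descFactorial_eq_prod_range]
    have hmem : m % p ∈ Finset.range p := Finset.mem_range.mpr (Nat.mod_lt _ hp)
    refine dvd_trans ?_ (Finset.dvd_prod_of_mem _ hmem)
    have h1 := Nat.div_add_mod m p
    have h2 : p * (m / p + 1) = p * (m / p) + p := by ring
    exact ⟨m / p + 1, by omega⟩
  rw [(CharP.cast_eq_zero_iff k p _).mpr hdvd, zero_mul]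

private lemma coeffZeroOfIter {p : ℕ} (hp : p.Prime) [CharP k p] {N : k[X]}
    (hN : derivative^[p - 1] N = 0) {j : ℕ} (hj : j % p = p - 1) : N.coeff j = 0 := by
  have hjge : p - 1 ≤ j := hj ▸ Nat.mod_le j p
  have h0 : (derivative^[p - 1] N).coeff (j - (p - 1)) = 0 := by rw [hN, coeff_zero]
  rw [Polynomial.coeff_iterate_derivative, Nat.sub_add_cancel hjge, nsmul_eq_mul,
    mul_eq_zero] at h0
  rcases h0 with h0 | h0
  · exfalso
    have hdvd : p ∣ j.descFactorial (p - 1) := (CharP.cast_eq_zero_iff k p _).mp h0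
    rw [Nat.descFactorial_eq_prod_range] at hdvd
    obtain ⟨i, hi, hpi⟩ := hp.prime.exists_mem_finset_dvd hdvd
    rw [Finset.mem_range] at hi
    obtain ⟨c, hc⟩ := hpi
    have hij : i ≤ j := le_trans hi.le hjge
    have hjc : j = p * c + i := by omega
    have : j % p = i := by
      rw [hjc, Nat.mul_add_mod, Nat.mod_eq_of_lt (lt_trans hi (Nat.sub_lt hp.pos one_pos))]
    omega
  · exact h0

private lemma existsAntideriv {p : ℕ} (hp : p.Prime) [CharP k p] {N : k[X]}
    (hN : ∀ j, j % p = p - 1 → N.coeff j = 0) : ∃ M : k[X], derivative M = N := by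
  refine ⟨∑ i ∈ N.support, C (N.coeff i * (((i + 1 : ℕ) : k))⁻¹) * X ^ (i + 1), ?_⟩
  rw [derivative_sum]
  rw [Finset.sum_congr rfl (fun i hi => ?_)]
  · exact (Polynomial.as_sum_support_C_mul_X_pow N).symm
  · show derivative (C (N.coeff i * (((i + 1 : ℕ) : k))⁻¹) * X ^ (i + 1)) = C (N.coeff i) * X ^ i
    rw [derivative_C_mul_X_pow]
    have hne : ((i + 1 : ℕ) : k) ≠ 0 := by
      rw [Ne, CharP.cast_eq_zero_iff k p]
      rintro ⟨c, hc⟩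
      have hppos := hp.pos
      have hc1 : 1 ≤ c := by
        rcases Nat.eq_zero_or_pos c with h0 | h0
        · subst h0; omega
        · exact h0
      have hpc : p * c = p * (c - 1) + p := by
        have hcc : c = (c - 1) + 1 := by omega
        calc p * c = p * ((c - 1) + 1) := by rw [← hcc]
        _ = p * (c - 1) + p := by ring
      have hi2 : i = p * (c - 1) + (p - 1) := by omega
      have hmod : i % p = p - 1 := by
        rw [hi2, Nat.mul_add_mod, Nat.mod_eq_of_lt (Nat.sub_lt hp.pos one_pos)]
      exact (Polynomial.mem_support_iff.mp hi) (hN i hmod)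
    congr 1
    rw [mul_assoc, inv_mul_cancel₀ hne, mul_one]

private lemma exactIffCoeff {p : ℕ} (hp : p.Prime) [CharP k p] (N D : k[X]) (hD : D ≠ 0) :
    IsExactRF (algebraMap k[X] (RatFunc k) N / algebraMap k[X] (RatFunc k) (D ^ p)) ↔
      ∀ j, j % p = p - 1 → N.coeff j = 0 := by
  have hinj : Function.Injective (algebraMap k[X] (RatFunc k)) := RatFunc.algebraMap_injective k
  set φ := algebraMap k[X] (RatFunc k) with hφ
  have hne0 : ∀ w : k[X], w ≠ 0 → φ w ≠ 0 := fun w hw hc => hw (hinj (by rw [hc, map_zero]))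
  have hφDp : φ (D ^ p) ≠ 0 := hne0 _ (pow_ne_zero _ hD)
  have hDconst : derivative (D ^ p) = 0 := by
    rw [derivative_pow, CharP.cast_eq_zero k p, map_zero, zero_mul, zero_mul]
  constructor
  · rintro ⟨f, u, v, hv, -, hg⟩ j hj
    have hφv2 : φ (v ^ 2) ≠ 0 := hne0 _ (pow_ne_zero _ hv)
    rw [div_eq_div_iff hφDp hφv2] at hg
    have hcross : N * v ^ 2 = (derivative u * v - u * derivative v) * D ^ p := by
      apply hinj
      rw [map_mul, map_mul, hg]
    obtain ⟨q, hq⟩ : ∃ q, p = q + 1 := ⟨p - 1, by have := hp.pos; omega⟩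
    subst hq
    have hc2 : ((2 * q + 2 : ℕ) : k) = 0 :=
      (CharP.cast_eq_zero_iff k (q + 1) _).mpr ⟨2, by omega⟩
    have hc1 : ((2 * q + 1 : ℕ) : k) = -1 := by
      push_cast at hc2 ⊢
      linear_combination hc2
    have hdU : derivative (u * v ^ (2 * q + 1)) =
        v ^ (2 * q) * (derivative u * v - u * derivative v) := by
      rw [derivative_mul, derivative_pow, hc1, show 2 * q + 1 - 1 = 2 * q from by omega,
        map_neg, map_one]
      ring
    have hkey : N * v ^ (2 * q + 2) = derivative (u * v ^ (2 * q + 1)) * D ^ (q + 1) := by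
      rw [hdU]
      calc N * v ^ (2 * q + 2) = N * v ^ 2 * v ^ (2 * q) := by ring
      _ = (derivative u * v - u * derivative v) * D ^ (q + 1) * v ^ (2 * q) := by rw [hcross]
      _ = v ^ (2 * q) * (derivative u * v - u * derivative v) * D ^ (q + 1) := by ring
    have hvconst : derivative (v ^ (2 * q + 2)) = 0 := by
      rw [derivative_pow, hc2, map_zero, zero_mul, zero_mul]
    have h5 : derivative^[q] N * v ^ (2 * q + 2) = 0 := by
      rw [← iterDerMulConst hvconst q N, hkey, iterDerMulConst hDconst q,
        ← Function.iterate_succ_apply derivative q (u * v ^ (2 * q + 1)),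
        iterDerP hp.pos, zero_mul]
    have h6 : derivative^[q + 1 - 1] N = 0 := by
      rw [show q + 1 - 1 = q from by omega]
      rcases mul_eq_zero.mp h5 with h | h
      · exact h
      · exact absurd h (pow_ne_zero _ hv)
    exact coeffZeroOfIter hp h6 hj
  · intro hcoeff
    obtain ⟨M, hM⟩ := existsAntideriv hp hcoeff
    refine ⟨φ M / φ (D ^ p), M, D ^ p, pow_ne_zero _ hD, rfl, ?_⟩
    have hφDp2 : φ ((D ^ p) ^ 2) ≠ 0 := hne0 _ (pow_ne_zero _ (pow_ne_zero _ hD))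
    rw [hDconst, mul_zero, sub_zero, hM, div_eq_div_iff hφDp hφDp2]
    simp only [hφ, ← map_mul]
    congr 1
    ring
end Aux

private lemma spanNeTopIffZero {k : Type*} [Field k] [IsAlgClosed k] {n : ℕ}
    (S : Set (MvPolynomial (Option (Fin n)) k)) :
    Ideal.span S ≠ ⊤ ↔ ∃ x : Option (Fin n) → k, ∀ q ∈ S, MvPolynomial.eval x q = 0 := by
  constructor
  · intro hI
    by_contra hemp
    push_neg at hemp
    have hempty : MvPolynomial.zeroLocus k (Ideal.span S) = ∅ := by
      rw [MvPolynomial.zeroLocus_span]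
      ext x
      simp only [Set.mem_setOf_eq, Set.mem_empty_iff_false, iff_false]
      intro hx
      obtain ⟨q, hqS, hq⟩ := hemp x
      exact hq (hx q hqS)
    have hrad := MvPolynomial.vanishingIdeal_zeroLocus_eq_radical (K := k) (Ideal.span S)
    rw [hempty, MvPolynomial.vanishingIdeal_empty] at hrad
    exact hI (Ideal.radical_eq_top.mp hrad.symm)
  · rintro ⟨x, hx⟩ hI
    have hmem : x ∈ MvPolynomial.zeroLocus k (Ideal.span S) := by
      rw [MvPolynomial.zeroLocus_span]; exact hx
    have h1 : MvPolynomial.eval x (1 : MvPolynomial (Option (Fin n)) k) = 0 :=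
      hmem 1 (hI ▸ Submodule.mem_top)
    simp at h1


open MvPolynomial in
/-- Gröbner-basis criterion: with `aⱼ ∈ k[Y₁,…,Yₙ]` the coefficients of
`∏ᵢ (X - Yᵢ)^{p - hᵢ}`, the form `1/∏ (x - pᵢ)^{hᵢ}` is exact for some pairwise distinct
`pᵢ ∈ k` iff the ideal of `k[Y₁,…,Yₙ,S]` generated by the `aⱼ` for `j ≡ p - 1 (mod p)`
together with `1 - S·∏_{j<l}(Yⱼ - Yₗ)` is not the unit ideal. -/
theorem stmt9 {k : Type*} [Field k] [IsAlgClosed k] (p : ℕ) (hp : p.Prime) [CharP k p]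
    (n : ℕ) (h : Fin n → ℕ) (hh : ∀ i, 1 ≤ h i ∧ h i ≤ p) :
    (∃ P : Fin n → k, Function.Injective P ∧
        IsExactRF ((∏ i, (RatFunc.X - RatFunc.C (P i)) ^ h i)⁻¹)) ↔
      Ideal.span
        ({q : MvPolynomial (Option (Fin n)) k | ∃ j : ℕ, j ≡ p - 1 [MOD p] ∧
            q = MvPolynomial.rename some
              ((∏ i, (Polynomial.X - Polynomial.C (MvPolynomial.X i)) ^ (p - h i)
                  : Polynomial (MvPolynomial (Fin n) k)).coeff j)} ∪
          {1 - MvPolynomial.X none *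
            ∏ q ∈ Finset.univ.filter (fun q : Fin n × Fin n => q.1 < q.2),
              (MvPolynomial.X (some q.1) - MvPolynomial.X (some q.2))}) ≠ ⊤ := by
  rw [spanNeTopIffZero]
  have hmodeq : ∀ j : ℕ, (j ≡ p - 1 [MOD p]) ↔ j % p = p - 1 := fun j => by
    unfold Nat.ModEq
    rw [Nat.mod_eq_of_lt (Nat.sub_lt hp.pos one_pos)]
  have hcoeff : ∀ (P : Fin n → k) (j : ℕ),
      MvPolynomial.eval P ((∏ i, (Polynomial.X - Polynomial.C (MvPolynomial.X i)) ^ (p - h i)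
          : Polynomial (MvPolynomial (Fin n) k)).coeff j)
        = (∏ i, (Polynomial.X - Polynomial.C (P i)) ^ (p - h i) : k[X]).coeff j := by
    intro P j
    rw [← Polynomial.coeff_map]
    congr 1
    rw [Polynomial.map_prod]
    exact Finset.prod_congr rfl fun i _ => by
      rw [Polynomial.map_pow, Polynomial.map_sub, Polynomial.map_X, Polynomial.map_C,
        MvPolynomial.eval_X]
  have hDne : ∀ P : Fin n → k, (∏ i, (Polynomial.X - Polynomial.C (P i)) : k[X]) ≠ 0 := fun P =>
    Finset.prod_ne_zero_iff.mpr fun i _ => X_sub_C_ne_zero (P i)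
  have hgform : ∀ P : Fin n → k,
      (∏ i, (RatFunc.X - RatFunc.C (P i)) ^ h i)⁻¹ =
        algebraMap k[X] (RatFunc k) (∏ i, (Polynomial.X - Polynomial.C (P i)) ^ (p - h i)) /
          algebraMap k[X] (RatFunc k) ((∏ i, (Polynomial.X - Polynomial.C (P i))) ^ p) := by
    intro P
    set φ := algebraMap k[X] (RatFunc k) with hφdef
    have hne0 : ∀ w : k[X], w ≠ 0 → φ w ≠ 0 :=
      fun w hw hc => hw (RatFunc.algebraMap_injective k (by rw [hc, map_zero]))
    have hDB : (∏ i, (Polynomial.X - Polynomial.C (P i)) : k[X]) ^ p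
        = (∏ i, (Polynomial.X - Polynomial.C (P i)) ^ (p - h i)) * (∏ i, (Polynomial.X - Polynomial.C (P i)) ^ h i) := by
      rw [← Finset.prod_pow, ← Finset.prod_mul_distrib]
      exact Finset.prod_congr rfl fun i _ => by rw [← pow_add, Nat.sub_add_cancel (hh i).2]
    have hB : φ (∏ i, (Polynomial.X - Polynomial.C (P i)) ^ h i) = ∏ i, (RatFunc.X - RatFunc.C (P i)) ^ h i := by
      rw [map_prod]
      exact Finset.prod_congr rfl fun i _ => by
        rw [map_pow, map_sub, RatFunc.algebraMap_X, RatFunc.algebraMap_C]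
    have hNne : φ (∏ i, (Polynomial.X - Polynomial.C (P i)) ^ (p - h i)) ≠ 0 :=
      hne0 _ (Finset.prod_ne_zero_iff.mpr fun i _ => pow_ne_zero _ (X_sub_C_ne_zero (P i)))
    have hBne : φ (∏ i, (Polynomial.X - Polynomial.C (P i)) ^ h i) ≠ 0 :=
      hne0 _ (Finset.prod_ne_zero_iff.mpr fun i _ => pow_ne_zero _ (X_sub_C_ne_zero (P i)))
    rw [hDB, map_mul, ← hB, inv_eq_one_div,
      div_eq_div_iff hBne (mul_ne_zero hNne hBne)]
    ring
  constructor
  · rintro ⟨P, hPinj, hPex⟩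
    rw [hgform P] at hPex
    have hvanish := (exactIffCoeff hp _ _ (hDne P)).mp hPex
    set π := ∏ q ∈ Finset.univ.filter (fun q : Fin n × Fin n => q.1 < q.2),
      (P q.1 - P q.2) with hπ
    have hπne : π ≠ 0 := Finset.prod_ne_zero_iff.mpr fun q hq => by
      rw [Finset.mem_filter] at hq
      exact sub_ne_zero_of_ne fun hc => (ne_of_lt hq.2) (hPinj hc)
    refine ⟨fun o => Option.elim o π⁻¹ P, ?_⟩
    rintro q (hq | hq)
    · obtain ⟨j, hjmod, rfl⟩ := hq
      rw [MvPolynomial.eval_rename]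
      have hxs : (fun o => Option.elim o π⁻¹ P) ∘ some = P := rfl
      rw [hxs, hcoeff P j]
      exact hvanish j ((hmodeq j).mp hjmod)
    · rw [Set.mem_singleton_iff] at hq; subst hq
      rw [map_sub, map_one, map_mul, MvPolynomial.eval_X, map_prod]
      have hpr : (∏ q ∈ Finset.univ.filter (fun q : Fin n × Fin n => q.1 < q.2),
          MvPolynomial.eval (fun o => Option.elim o π⁻¹ P)
            (MvPolynomial.X (some q.1) - MvPolynomial.X (some q.2))) = π := by
        rw [hπ]
        exact Finset.prod_congr rfl fun q _ => by
          rw [map_sub, MvPolynomial.eval_X, MvPolynomial.eval_X]; rfl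
      rw [hpr]
      show 1 - π⁻¹ * π = 0
      rw [inv_mul_cancel₀ hπne, sub_self]
  · rintro ⟨x, hx⟩
    set P : Fin n → k := x ∘ some with hPdef
    set π := ∏ q ∈ Finset.univ.filter (fun q : Fin n × Fin n => q.1 < q.2),
      (P q.1 - P q.2) with hπ
    have hw := hx _ (Or.inr rfl)
    rw [map_sub, map_one, map_mul, MvPolynomial.eval_X, map_prod] at hw
    have hpr : (∏ q ∈ Finset.univ.filter (fun q : Fin n × Fin n => q.1 < q.2),
        MvPolynomial.eval x
          (MvPolynomial.X (some q.1) - MvPolynomial.X (some q.2))) = π := by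
      rw [hπ]
      exact Finset.prod_congr rfl fun q _ => by
        rw [map_sub, MvPolynomial.eval_X, MvPolynomial.eval_X]; rfl
    rw [hpr] at hw
    have hπne : π ≠ 0 := fun hc => by
      rw [hc, mul_zero, sub_zero] at hw
      exact one_ne_zero hw
    have hfac := Finset.prod_ne_zero_iff.mp hπne
    have hPinj : Function.Injective P := by
      intro a b hab
      by_contra hne
      rcases Ne.lt_or_gt hne with hlt | hlt
      · exact hfac (a, b) (Finset.mem_filter.mpr ⟨Finset.mem_univ _, hlt⟩)
          (by rw [hab, sub_self])
      · exact hfac (b, a) (Finset.mem_filter.mpr ⟨Finset.mem_univ _, hlt⟩)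
          (by rw [hab, sub_self])
    refine ⟨P, hPinj, ?_⟩
    rw [hgform P]
    refine (exactIffCoeff hp _ _ (hDne P)).mpr fun j hj => ?_
    rw [← hcoeff P j]
    have hxj := hx _ (Or.inl ⟨j, (hmodeq j).mpr hj, rfl⟩)
    rwa [MvPolynomial.eval_rename] at hxj
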